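/- With A, σ, Λ_k as above, choose k(1),…,k(r) ∈ ℕ^{n-d} whose images A_{σ̄}k(i) represent all r = [ℤ·A : ℤ·A_σ] classes of (ℤ·A)/(ℤ·A_σ). Then the sets Λ_{k(1)},…,Λ_{k(r)} form a partition of ℕ^{n-d}: they are pairwise disjoint and their union is ℕ^{n-d}. -/

import Mathlib

open Matrix

/-- The subgroup of `ℤ^d` generated by the columns of an integer matrix. -/
def colSpanZ {d : ℕ} {ι : Type} (M : Matrix (Fin d) ι ℤ) : AddSubgroup (Fin d → ℤ) :=
  AddSubgroup.closure (Set.range fun j => fun i => M i j)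

/-- `Λ_k := { k+m ∈ ℕ^{n-d} : A_{σ̄} m ∈ ℤA_σ }`, with coordinates ordered so that
`σ` comes first and `A = (Aσ | Aτ)`. -/
def Lam {d e : ℕ} (Aσ : Matrix (Fin d) (Fin d) ℤ) (Aτ : Matrix (Fin d) (Fin e) ℤ)
    (k : Fin e → ℤ) : Set (Fin e → ℤ) :=
  {x | (∀ j, 0 ≤ x j) ∧ Aτ *ᵥ (x - k) ∈ colSpanZ Aσ}

/-- If `k(1),…,k(r) ∈ ℕ^{n-d}` are such that the `A_{σ̄} k(i)` represent all
`r = [ℤA : ℤA_σ]` classes of `(ℤA)/(ℤA_σ)`, then the sets `Λ_{k(i)}` are pairwise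
disjoint and their union is `ℕ^{n-d}`. -/
theorem stmt8 (d e r : ℕ) (Aσ : Matrix (Fin d) (Fin d) ℤ) (Aτ : Matrix (Fin d) (Fin e) ℤ)
    (hdet : Aσ.det ≠ 0)
    (hr : r = (colSpanZ Aσ).relIndex (colSpanZ Aσ ⊔ colSpanZ Aτ))
    (k : Fin r → (Fin e → ℤ)) (hpos : ∀ i j, 0 ≤ k i j)
    (hinj : ∀ i i', Aτ *ᵥ k i - Aτ *ᵥ k i' ∈ colSpanZ Aσ → i = i')
    (hsurj : ∀ m : Fin e → ℤ, ∃ i, Aτ *ᵥ m - Aτ *ᵥ k i ∈ colSpanZ Aσ) :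
    (Pairwise fun i i' => Disjoint (Lam Aσ Aτ (k i)) (Lam Aσ Aτ (k i'))) ∧
      (⋃ i, Lam Aσ Aτ (k i)) = {x : Fin e → ℤ | ∀ j, 0 ≤ x j} := by
  constructor
  · intro i i' hne
    rw [Set.disjoint_left]
    rintro x ⟨hx1, hx2⟩ ⟨hy1, hy2⟩
    exact hne (hinj i i' (by
      have := sub_mem hy2 hx2
      rwa [← Matrix.mulVec_sub, sub_sub_sub_cancel_left, Matrix.mulVec_sub] at this))
  · ext x
    simp only [Set.mem_iUnion, Set.mem_setOf_eq]
    constructor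
    · rintro ⟨i, hx1, _⟩; exact hx1
    · intro hx
      obtain ⟨i, hi⟩ := hsurj x
      exact ⟨i, hx, by rwa [Matrix.mulVec_sub]⟩
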